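/- Centralized and federated Gram-Schmidt orthogonalization are equivalent: let v : Fin k → EuclideanSpace ℝ N be a linearly independent family of vectors indexed by the sigma type N = (s : Fin S) × Fin (n s), and suppose the families ũ_i^s : EuclideanSpace ℝ (Fin (n s)) (for i : Fin k, s : Fin S) satisfy the federated recursion ũ_i^s = v_i^s − Σ_{j < i} r_{ij} • ũ_j^s, where the aggregated residuals are r_{ij} = (Σ_t ⟨ũ_j^t, v_i^t⟩) / (Σ_t ⟨ũ_j^t, ũ_j^t⟩). Then for every i and s, ũ_i^s equals the local block (gramSchmidt ℝ v i)^s of the centrally computed Gram-Schmidt vector. -/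

import Mathlib

open scoped RealInnerProductSpace

/-- Helper instance (provable from Mathlib) so that `gramSchmidt` elaborates for families
indexed by `Fin k`. -/
instance finChainWellFoundedLT (k : ℕ) :
    @IsWellFounded (Fin k) (fun a b => @LT.lt _ (@Preorder.toLT _ (@PartialOrder.toPreorder _
      (@SemilatticeInf.toPartialOrder _ (@Lattice.toSemilatticeInf _
        (@DistribLattice.toLattice _ (@instDistribLatticeOfLinearOrder _
          Fin.instLinearOrder)))))) a b) :=
  inferInstanceAs (WellFoundedLT (Fin k))

/-- The local block `u^s = u ∘ Sigma.mk s` of a vertically partitioned vector `u` at site `s`. -/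
def localBlock {S : ℕ} {n : Fin S → ℕ}
    (u : EuclideanSpace ℝ ((s : Fin S) × Fin (n s))) (s : Fin S) :
    EuclideanSpace ℝ (Fin (n s)) :=
  WithLp.toLp 2 (fun j => u (Sigma.mk s j))

/-- Centralized and federated Gram-Schmidt orthogonalization are equivalent: if the local
families `ũ i s` satisfy the federated recursion `ũ_i^s = v_i^s − Σ_{j<i} r_{ij} • ũ_j^s`
with aggregated residuals `r_{ij} = (Σ_t ⟪ũ_j^t, v_i^t⟫)/(Σ_t ⟪ũ_j^t, ũ_j^t⟫)`, then
`ũ i s` equals the local block of the centrally computed Gram-Schmidt vector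
`gramSchmidt ℝ v i`. -/
theorem federated_gramSchmidt_eq_centralized (S k : ℕ) (n : Fin S → ℕ)
    (v : Fin k → EuclideanSpace ℝ ((s : Fin S) × Fin (n s)))
    (hv : LinearIndependent ℝ v)
    (u : Fin k → (s : Fin S) → EuclideanSpace ℝ (Fin (n s)))
    (hrec : ∀ (i : Fin k) (s : Fin S), u i s =
      localBlock (v i) s -
        ∑ j ∈ Finset.Iio i,
          ((∑ t : Fin S, ⟪u j t, localBlock (v i) t⟫) /
            (∑ t : Fin S, ⟪u j t, u j t⟫)) • u j s) :
    ∀ (i : Fin k) (s : Fin S), u i s = localBlock (InnerProductSpace.gramSchmidt ℝ v i) s := by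
  -- inner product over the sigma-type decomposes as a sum of local inner products
  have hinner : ∀ a b : EuclideanSpace ℝ ((s : Fin S) × Fin (n s)),
      ⟪a, b⟫ = ∑ t : Fin S, ⟪localBlock a t, localBlock b t⟫ := by
    intro a b
    simp only [PiLp.inner_apply, RCLike.inner_apply, starRingEnd_apply, star_trivial,
      localBlock, WithLp.ofLp_toLp]
    rw [← Finset.univ_sigma_univ, Finset.sum_sigma]
  have hsub : ∀ (a b : EuclideanSpace ℝ ((s : Fin S) × Fin (n s))) (t : Fin S),
      localBlock (a - b) t = localBlock a t - localBlock b t := fun _ _ _ => rfl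
  have hsmul : ∀ (c : ℝ) (a : EuclideanSpace ℝ ((s : Fin S) × Fin (n s))) (t : Fin S),
      localBlock (c • a) t = c • localBlock a t := fun _ _ _ => rfl
  have hsum : ∀ (F : Fin k → EuclideanSpace ℝ ((s : Fin S) × Fin (n s)))
      (T : Finset (Fin k)) (t : Fin S),
      localBlock (∑ j ∈ T, F j) t = ∑ j ∈ T, localBlock (F j) t := by
    intro F T t
    classical
    induction T using Finset.induction with
    | empty => rfl
    | insert _ _ hx ih =>
      rw [Finset.sum_insert hx, Finset.sum_insert hx, ← ih]
      rfl
  intro i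
  induction i using WellFoundedLT.induction with
  | _ i ih =>
    intro s
    rw [hrec i s, InnerProductSpace.gramSchmidt_def ℝ v i, hsub, hsum]
    congr 1
    apply Finset.sum_congr rfl
    intro j hj
    have hji : j < i := Finset.mem_Iio.mp hj
    have huj : ∀ t, u j t = localBlock (InnerProductSpace.gramSchmidt ℝ v j) t := ih j hji
    rw [Submodule.starProjection_singleton, hsmul]
    have h1 : (∑ t : Fin S, ⟪u j t, localBlock (v i) t⟫)
        = ⟪InnerProductSpace.gramSchmidt ℝ v j, v i⟫ := by
      rw [hinner]
      exact Finset.sum_congr rfl fun t _ => by rw [huj t]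
    have h2 : (∑ t : Fin S, ⟪u j t, u j t⟫) = ‖InnerProductSpace.gramSchmidt ℝ v j‖ ^ 2 := by
      rw [← real_inner_self_eq_norm_sq, hinner]
      exact Finset.sum_congr rfl fun t _ => by rw [huj t]
    rw [h1, h2, huj s]
    norm_cast
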